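/- For every natural number $m$ and ordinal $\alpha$: every set mapping $F:[\aleph_{\alpha+m}]^m\to[\aleph_{\alpha+m}]^{<\aleph_\alpha}$ has a free set of size $m+1$. (Kuratowski–Sierpiński: $(\aleph_{\alpha+m}, m, \aleph_\alpha)\to m+1$.) -/

import Mathlib

open Cardinal

universe u

private lemma mk_Iio_ord' (c : Cardinal.{u}) :
    #(Set.Iio c.ord) = Cardinal.lift.{u+1} c := by
  rw [Ordinal.mk_Iio_ordinal, Cardinal.card_ord]

private lemma exists_notMem' {s t : Set Ordinal.{u}} (h : #s < #t) :
    ∃ b ∈ t, b ∉ s := by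
  by_contra hb
  push_neg at hb
  exact absurd (Cardinal.mk_le_mk_of_subset hb) (not_le.2 h)

private lemma mk_finset_subset' {S : Set Ordinal.{u}} (h : ℵ₀ ≤ #S) :
    #{x : Finset Ordinal.{u} | ↑x ⊆ S} ≤ #S := by
  have : Infinite ↥S := Cardinal.infinite_iff.2 h
  refine le_trans (Cardinal.mk_le_of_injective
    (f := fun x : {x : Finset Ordinal.{u} | ↑x ⊆ S} =>
      Finset.preimage x.1 (Subtype.val : S → Ordinal.{u}) Subtype.val_injective.injOn) ?_)
    (Cardinal.mk_finset_of_infinite ↥S).le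
  rintro ⟨x, hx⟩ ⟨y, hy⟩ hxy
  simp only [Subtype.mk.injEq] at hxy ⊢
  ext a
  constructor
  · intro ha
    have h1 : (⟨a, hx ha⟩ : S) ∈ Finset.preimage x Subtype.val Subtype.val_injective.injOn := by
      simp [Finset.mem_preimage, ha]
    rw [hxy] at h1
    simpa [Finset.mem_preimage] using h1
  · intro ha
    have h1 : (⟨a, hy ha⟩ : S) ∈ Finset.preimage y Subtype.val Subtype.val_injective.injOn := by
      simp [Finset.mem_preimage, ha]
    rw [← hxy] at h1
    simpa [Finset.mem_preimage] using h1

private lemma closure_lemma' (m : ℕ) (κ lam : Cardinal.{u}) (hκ : ℵ₀ ≤ κ) (hκl : κ ≤ lam)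
    (F : Finset Ordinal.{u} → Set Ordinal.{u})
    (hF : ∀ x : Finset Ordinal.{u}, (∀ a ∈ x, a < lam.ord) → x.card = m →
          F x ⊆ Set.Iio lam.ord ∧ #(F x) ≤ Cardinal.lift.{u+1} κ) :
    ∃ A : Set Ordinal.{u}, A ⊆ Set.Iio lam.ord ∧ #A = Cardinal.lift.{u+1} κ ∧
      ∀ x : Finset Ordinal.{u}, ↑x ⊆ A → x.card = m → F x ⊆ A := by
  have hκ' : ℵ₀ ≤ Cardinal.lift.{u+1} κ := Cardinal.aleph0_le_lift.2 hκ
  set T : Set Ordinal.{u} → Set (Finset Ordinal.{u}) :=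
    fun S => {x : Finset Ordinal.{u} | ↑x ⊆ S ∧ x.card = m} with hT
  let A : ℕ → Set Ordinal.{u} := fun n => Nat.rec (Set.Iio κ.ord)
    (fun _ S => S ∪ ⋃ x ∈ T S, F x) n
  have hAs : ∀ n, A (n+1) = A n ∪ ⋃ x ∈ T (A n), F x := fun n => rfl
  have hmono : Monotone A := monotone_nat_of_le_succ fun n => by
    rw [hAs]; exact Set.subset_union_left
  have hinv : ∀ n, A n ⊆ Set.Iio lam.ord ∧ #↥(A n) = Cardinal.lift.{u+1} κ := by
    intro n
    induction n with
    | zero =>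
      constructor
      · exact fun a ha => lt_of_lt_of_le ha (Cardinal.ord_le_ord.2 hκl)
      · exact mk_Iio_ord' κ
    | succ n ih =>
      obtain ⟨ih1, ih2⟩ := ih
      have hbnd : ∀ x ∈ T (A n), F x ⊆ Set.Iio lam.ord ∧ #(F x) ≤ Cardinal.lift.{u+1} κ := by
        rintro x ⟨hx1, hx2⟩
        exact hF x (fun a ha => ih1 (hx1 ha)) hx2
      have hTle : #(T (A n)) ≤ Cardinal.lift.{u+1} κ := by
        refine le_trans (le_trans (Cardinal.mk_le_mk_of_subset ?_) (mk_finset_subset' ?_)) ih2.le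
        · exact fun x hx => hx.1
        · rw [ih2]; exact hκ'
      have hU : #(⋃ x ∈ T (A n), F x) ≤ Cardinal.lift.{u+1} κ := by
        rw [Set.biUnion_eq_iUnion]
        refine le_trans Cardinal.mk_iUnion_le_sum_mk ?_
        refine le_trans (Cardinal.sum_le_sum _ (fun _ => Cardinal.lift.{u+1} κ)
          (fun i => (hbnd i.1 i.2).2)) ?_
        rw [Cardinal.sum_const']
        calc #(T (A n)) * Cardinal.lift.{u+1} κ
            ≤ Cardinal.lift.{u+1} κ * Cardinal.lift.{u+1} κ := mul_le_mul_left hTle _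
          _ = Cardinal.lift.{u+1} κ := Cardinal.mul_eq_self hκ'
      constructor
      · rw [hAs]
        refine Set.union_subset ih1 ?_
        exact Set.iUnion₂_subset fun x hx => (hbnd x hx).1
      · rw [hAs]
        refine le_antisymm ?_ ?_
        · refine le_trans (Cardinal.mk_union_le _ _) ?_
          rw [ih2]
          calc Cardinal.lift.{u+1} κ + #(⋃ x ∈ T (A n), F x)
              ≤ Cardinal.lift.{u+1} κ + Cardinal.lift.{u+1} κ := add_le_add_right hU _
            _ = Cardinal.lift.{u+1} κ := Cardinal.add_eq_self hκ'
        · rw [← ih2]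
          exact Cardinal.mk_le_mk_of_subset Set.subset_union_left
  refine ⟨⋃ n, A n, ?_, ?_, ?_⟩
  · exact Set.iUnion_subset fun n => (hinv n).1
  · refine le_antisymm ?_ ?_
    · have heq : (⋃ n, A n) = ⋃ i : ULift.{u+1} ℕ, A i.down := by
        ext a
        simp only [Set.mem_iUnion]
        exact ⟨fun ⟨n, h⟩ => ⟨⟨n⟩, h⟩, fun ⟨i, h⟩ => ⟨i.down, h⟩⟩
      rw [heq]
      refine le_trans (Cardinal.mk_iUnion_le _) ?_
      have h1 : #(ULift.{u+1} ℕ) ≤ Cardinal.lift.{u+1} κ := by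
        rw [Cardinal.mk_eq_aleph0]
        exact Cardinal.aleph0_le_lift.2 hκ
      have h2 : ⨆ i : ULift.{u+1} ℕ, #↥(A i.down) ≤ Cardinal.lift.{u+1} κ :=
        ciSup_le' fun i => ((hinv i.down).2).le
      calc #(ULift.{u+1} ℕ) * ⨆ i : ULift.{u+1} ℕ, #↥(A i.down)
          ≤ Cardinal.lift.{u+1} κ * Cardinal.lift.{u+1} κ := mul_le_mul' h1 h2
        _ = Cardinal.lift.{u+1} κ := Cardinal.mul_eq_self hκ'
    · rw [← (hinv 0).2]
      exact Cardinal.mk_le_mk_of_subset (Set.subset_iUnion A 0)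
  · intro x hx hcard
    have hmem : ∀ a : {a // a ∈ x}, ∃ n : ℕ, (a : Ordinal) ∈ A n := by
      rintro ⟨a, ha⟩
      simpa using hx ha
    choose g hg using hmem
    have hxN : ↑x ⊆ A (x.attach.sup g) := fun a ha =>
      hmono (Finset.le_sup (Finset.mem_attach x ⟨a, ha⟩)) (hg ⟨a, ha⟩)
    intro c hc
    refine Set.mem_iUnion.2 ⟨x.attach.sup g + 1, ?_⟩
    rw [hAs]
    exact Set.mem_union_right _ (Set.mem_biUnion ⟨hxN, hcard⟩ hc)

/-- Kuratowski–Sierpiński: `(ℵ_{α+m}, m, ℵ_α) → m+1`. Every set mapping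
`F : [ℵ_{α+m}]^m → [ℵ_{α+m}]^{<ℵ_α}` has a free set of size `m+1`. -/
theorem stmt9 (m : ℕ) (α : Ordinal.{u}) :
    ∀ F : Finset Ordinal → Set Ordinal,
      (∀ x : Finset Ordinal, (∀ a ∈ x, a < (Cardinal.aleph (α + m)).ord) →
        x.card = m →
        F x ∩ ↑x = ∅ ∧ F x ⊆ Set.Iio (Cardinal.aleph (α + m)).ord ∧
          Cardinal.mk (F x) < Cardinal.lift.{u+1} (Cardinal.aleph α)) →
      ∃ X : Finset Ordinal, (∀ a ∈ X, a < (Cardinal.aleph (α + m)).ord) ∧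
        X.card = m + 1 ∧ ∀ x ⊆ X, x.card = m → F x ∩ ↑X = ∅ := by
  induction m with
  | zero =>
    simp only [Nat.cast_zero, add_zero]
    intro F hF
    obtain ⟨h1, h2, h3⟩ := hF ∅ (by simp) (by simp)
    have hlt : #(F ∅) < #(Set.Iio (Cardinal.aleph α).ord) := by
      rw [mk_Iio_ord']; exact h3
    obtain ⟨b, hb, hbn⟩ := exists_notMem' hlt
    refine ⟨{b}, by simpa using hb, by simp, ?_⟩
    intro x hx hcard
    rw [Finset.card_eq_zero.1 hcard]
    ext c
    simp only [Set.mem_inter_iff, Finset.coe_singleton, Set.mem_singleton_iff,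
      Set.mem_empty_iff_false, iff_false, not_and]
    rintro hc rfl
    exact hbn hc
  | succ m ih =>
    intro F hF
    set κc := Cardinal.aleph (α + m) with hκc
    set lamc := Cardinal.aleph (α + (m + 1 : ℕ)) with hlamc
    have hκlam : κc < lamc := by
      rw [hκc, hlamc]
      refine Cardinal.aleph_lt_aleph.2 ?_
      exact add_lt_add_right (by exact_mod_cast Nat.lt_succ_self m) α
    have hκ : ℵ₀ ≤ κc := Cardinal.aleph0_le_aleph _
    have halκ : Cardinal.aleph α ≤ κc := Cardinal.aleph_le_aleph.2 le_self_add
    have hF' : ∀ x : Finset Ordinal.{u}, (∀ a ∈ x, a < lamc.ord) → x.card = m + 1 →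
        F x ⊆ Set.Iio lamc.ord ∧ #(F x) ≤ Cardinal.lift.{u+1} κc := by
      intro x hx hc
      obtain ⟨_, d2, d3⟩ := hF x hx hc
      exact ⟨d2, d3.le.trans (Cardinal.lift_le.2 halκ)⟩
    obtain ⟨A, hA1, hA2, hA3⟩ := closure_lemma' (m + 1) κc lamc hκ hκlam.le F hF'
    have hblt : #↥A < #(Set.Iio lamc.ord) := by
      rw [hA2, mk_Iio_ord']
      exact Cardinal.lift_lt.2 hκlam
    obtain ⟨b, hb, hbA⟩ := exists_notMem' hblt
    have hmkA : #(Set.Iio κc.ord) = #↥A := by rw [mk_Iio_ord', hA2]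
    obtain ⟨e⟩ := Cardinal.eq.1 hmkA
    classical
    let eb : Ordinal.{u} → Ordinal.{u} := fun a =>
      if h : a < κc.ord then (e ⟨a, h⟩ : Ordinal) else a
    have heb : ∀ a (h : a < κc.ord), eb a = ↑(e ⟨a, h⟩) := fun a h => dif_pos h
    have hebA : ∀ a, a < κc.ord → eb a ∈ A := fun a h => by
      rw [heb a h]; exact (e ⟨a, h⟩).2
    have hebInj : ∀ a a', a < κc.ord → a' < κc.ord → eb a = eb a' → a = a' := by
      intro a a' h h' hh
      rw [heb a h, heb a' h'] at hh
      have := e.injective (Subtype.val_injective hh)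
      exact congrArg Subtype.val this
    -- the pulled-back set mapping
    let pull : Set Ordinal.{u} → Set Ordinal.{u} :=
      fun z => {c | ∃ h' : c < κc.ord, ↑(e ⟨c, h'⟩) ∈ z}
    have hpull_sub : ∀ z, pull z ⊆ Set.Iio κc.ord := fun z c hc => hc.choose
    have hpull_mk : ∀ z : Set Ordinal.{u}, #↥(pull z) ≤ #↥z := by
      intro z
      refine Cardinal.mk_le_of_injective
        (f := fun c : pull z => (⟨↑(e ⟨c.1, c.2.choose⟩), c.2.choose_spec⟩ : z)) ?_
      rintro ⟨c, hc⟩ ⟨c', hc'⟩ h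
      simp only [Subtype.mk.injEq] at h ⊢
      exact congrArg Subtype.val (e.injective (Subtype.val_injective h))
    let G : Finset Ordinal.{u} → Set Ordinal.{u} := fun y =>
      if h : (∀ a ∈ y, a < κc.ord) ∧ y.card = m then
        pull (F (insert b (y.image eb))) else ∅
    -- facts about the transferred finsets
    have hzfacts : ∀ y : Finset Ordinal.{u}, (∀ a ∈ y, a < κc.ord) → y.card = m →
        (∀ a ∈ insert b (y.image eb), a < lamc.ord) ∧ (insert b (y.image eb)).card = m + 1 ∧
          ↑(y.image eb) ⊆ A := by
      intro y hy hyc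
      have himg : ↑(y.image eb) ⊆ A := by
        intro a ha
        simp only [Finset.coe_image, Set.mem_image, Finset.mem_coe] at ha
        obtain ⟨a', ha', rfl⟩ := ha
        exact hebA a' (hy a' ha')
      have hbimg : b ∉ y.image eb := fun hmem => hbA (himg hmem)
      refine ⟨?_, ?_, himg⟩
      · intro a ha
        rcases Finset.mem_insert.1 ha with rfl | ha
        · exact hb
        · exact hA1 (himg ha)
      · rw [Finset.card_insert_of_notMem hbimg,
          Finset.card_image_of_injOn (fun a ha a' ha' hh => hebInj a a' (hy a ha) (hy a' ha') hh),
          hyc]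
    have hG : ∀ y : Finset Ordinal.{u}, (∀ a ∈ y, a < κc.ord) → y.card = m →
        G y ∩ ↑y = ∅ ∧ G y ⊆ Set.Iio κc.ord ∧ #(G y) < Cardinal.lift.{u+1} (Cardinal.aleph α) := by
      intro y hy hyc
      have hGy : G y = pull (F (insert b (y.image eb))) := dif_pos ⟨hy, hyc⟩
      obtain ⟨hz1, hz2, _⟩ := hzfacts y hy hyc
      obtain ⟨d1, d2, d3⟩ := hF (insert b (y.image eb)) hz1 hz2
      refine ⟨?_, ?_, ?_⟩
      · ext c
        simp only [Set.mem_inter_iff, Set.mem_empty_iff_false, iff_false, not_and]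
        intro hc hcy
        rw [hGy] at hc
        obtain ⟨h', hmem⟩ := hc
        have : (↑(e ⟨c, h'⟩) : Ordinal) ∈ F (insert b (y.image eb)) ∩ ↑(insert b (y.image eb)) := by
          refine ⟨hmem, ?_⟩
          simp only [Finset.coe_insert, Set.mem_insert_iff, Finset.coe_image]
          right
          exact ⟨c, hcy, heb c h'⟩
        rw [d1] at this
        exact this
      · rw [hGy]; exact hpull_sub _
      · rw [hGy]
        exact lt_of_le_of_lt (hpull_mk _) d3
    obtain ⟨X', hX1, hX2, hX3⟩ := ih G (fun y hy hyc => hG y hy hyc)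
    have hinjX' : Set.InjOn eb ↑X' := fun a ha a' ha' hh =>
      hebInj a a' (hX1 a ha) (hX1 a' ha') hh
    have hXA : ↑(X'.image eb) ⊆ A := by
      intro a ha
      simp only [Finset.coe_image, Set.mem_image, Finset.mem_coe] at ha
      obtain ⟨a', ha', rfl⟩ := ha
      exact hebA a' (hX1 a' ha')
    have hbX : b ∉ X'.image eb := fun hmem => hbA (hXA hmem)
    refine ⟨insert b (X'.image eb), ?_, ?_, ?_⟩
    · intro a ha
      rcases Finset.mem_insert.1 ha with rfl | ha
      · exact hb
      · exact hA1 (hXA ha)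
    · rw [Finset.card_insert_of_notMem hbX, Finset.card_image_of_injOn hinjX', hX2]
    · intro x hx hxcard
      -- x is bounded by lamc.ord
      have hxbnd : ∀ a ∈ x, a < lamc.ord := by
        intro a ha
        rcases Finset.mem_insert.1 (hx ha) with rfl | ha'
        · exact hb
        · exact hA1 (hXA ha')
      obtain ⟨e1, _, _⟩ := hF x hxbnd hxcard
      by_cases hbx : b ∈ x
      · -- x = insert b (y.image eb) for y = X'.filter ...
        set y : Finset Ordinal.{u} := X'.filter (fun a => eb a ∈ x) with hy
        have hyX' : y ⊆ X' := Finset.filter_subset _ _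
        have hybnd : ∀ a ∈ y, a < κc.ord := fun a ha => hX1 a (hyX' ha)
        have himg_eq : y.image eb = x.erase b := by
          ext c
          simp only [Finset.mem_image, Finset.mem_erase, hy, Finset.mem_filter]
          constructor
          · rintro ⟨a, ⟨haX, hax⟩, rfl⟩
            exact ⟨fun hh => hbA (hh ▸ hebA a (hX1 a haX)), hax⟩
          · rintro ⟨hcb, hcx⟩
            rcases Finset.mem_insert.1 (hx hcx) with rfl | hc'
            · exact absurd rfl hcb
            · obtain ⟨a, haX, rfl⟩ := Finset.mem_image.1 hc'
              exact ⟨a, ⟨haX, hcx⟩, rfl⟩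
        have hycard : y.card = m := by
          have := Finset.card_image_of_injOn (hinjX'.mono (by exact_mod_cast hyX'))
          rw [himg_eq, Finset.card_erase_of_mem hbx, hxcard] at this
          omega
        have hxeq : x = insert b (y.image eb) := by
          rw [himg_eq, Finset.insert_erase hbx]
        have hGy : G y = pull (F (insert b (y.image eb))) := dif_pos ⟨hybnd, hycard⟩
        have hfree := hX3 y hyX' hycard
        ext c
        simp only [Set.mem_inter_iff, Set.mem_empty_iff_false, iff_false, not_and]
        intro hcF hcX
        rcases Finset.mem_insert.1 (by exact_mod_cast hcX) with rfl | hc'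
        · -- c = b ∈ x, contradicts F x ∩ x = ∅
          have : c ∈ F x ∩ ↑x := ⟨hcF, by exact_mod_cast hbx⟩
          rw [e1] at this
          exact this
        · obtain ⟨a, haX, rfl⟩ := Finset.mem_image.1 hc'
          have haκ : a < κc.ord := hX1 a haX
          have : a ∈ G y ∩ ↑X' := by
            refine ⟨?_, by exact_mod_cast haX⟩
            rw [hGy]
            exact ⟨haκ, by rw [← heb a haκ, ← hxeq]; exact hcF⟩
          rw [hfree] at this
          exact this
      · -- b ∉ x : then x = X'.image eb
        have hxsub : x ⊆ X'.image eb := by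
          intro a ha
          rcases Finset.mem_insert.1 (hx ha) with rfl | ha'
          · exact absurd ha hbx
          · exact ha'
        have hxeq : x = X'.image eb := by
          refine Finset.eq_of_subset_of_card_le hxsub ?_
          rw [Finset.card_image_of_injOn hinjX', hX2, hxcard]
        have hFxA : F x ⊆ A := by
          refine hA3 x ?_ hxcard
          rw [hxeq]; exact hXA
        ext c
        simp only [Set.mem_inter_iff, Set.mem_empty_iff_false, iff_false, not_and]
        intro hcF hcX
        rcases Finset.mem_insert.1 (by exact_mod_cast hcX) with rfl | hc'
        · exact hbA (hFxA hcF)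
        · have : c ∈ F x ∩ ↑x := ⟨hcF, by rw [hxeq]; exact_mod_cast hc'⟩
          rw [e1] at this
          exact this
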